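/- The unique solution θ ∈ (0, π) of the equation 2π/3 − arccos((3φ−1)/4) = 2·arctan( √(cos²(γ/2) − cos²(θ/2)) / cos(θ/2) ), where γ = arccos(1/3) and φ = (1+√5)/2, is θ = 2π/3. -/
import Mathlib

open Real

lemma key_arctan_lt : Real.arctan (Real.sqrt (5/3)) < Real.pi / 3 := by
  have h3 : Real.arctan (Real.sqrt 3) = Real.pi / 3 := by
    have : Real.tan (Real.pi / 3) = Real.sqrt 3 := by
      rw [Real.tan_eq_sin_div_cos, Real.sin_pi_div_three, Real.cos_pi_div_three]
      ring
    rw [← this]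
    exact Real.arctan_tan (by linarith [Real.pi_pos]) (by linarith [Real.pi_pos])
  rw [← h3]
  exact Real.arctan_strictMono (by
    apply Real.sqrt_lt_sqrt <;> norm_num)

lemma key : Real.arccos ((1 + 3 * Real.sqrt 5) / 8)
    = 2 * Real.pi / 3 - 2 * Real.arctan (Real.sqrt (5/3)) := by
  set B := Real.arctan (Real.sqrt (5/3)) with hB
  have hBpos : 0 < B := by
    have h := Real.arctan_strictMono (show (0:ℝ) < Real.sqrt (5/3) by positivity)
    rwa [Real.arctan_zero] at h
  have hBlt : B < Real.pi / 3 := key_arctan_lt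
  have hx2 : Real.sqrt (5/3) ^ 2 = 5/3 := Real.sq_sqrt (by norm_num)
  have hcB : Real.cos B ^ 2 = 3/8 := by
    rw [hB, Real.cos_arctan]
    rw [div_pow, one_pow, Real.sq_sqrt (by positivity), hx2]
    norm_num
  have hsB2 : Real.sin B ^ 2 = 5/8 := by
    have := Real.sin_sq_add_cos_sq B
    nlinarith
  have hsBpos : 0 < Real.sin B := Real.sin_pos_of_pos_of_lt_pi hBpos
    (by linarith [Real.pi_pos])
  have hcBpos : 0 < Real.cos B := Real.cos_arctan_pos _
  have hsc : Real.sin B * Real.cos B = Real.sqrt 15 / 8 := by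
    have h15 : Real.sqrt 15 ^ 2 = 15 := Real.sq_sqrt (by norm_num)
    have h15pos : (0:ℝ) < Real.sqrt 15 := by positivity
    nlinarith [sq_nonneg (Real.sin B * Real.cos B - Real.sqrt 15 / 8),
      sq_nonneg (Real.sin B * Real.cos B + Real.sqrt 15 / 8),
      mul_pos hsBpos hcBpos]
  have hval : Real.cos (2 * Real.pi / 3 - 2 * B) = (1 + 3 * Real.sqrt 5) / 8 := by
    have h2 : (2 : ℝ) * Real.pi / 3 = Real.pi - Real.pi / 3 := by ring
    rw [Real.cos_sub, h2, Real.cos_pi_sub, Real.sin_pi_sub, Real.cos_pi_div_three,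
      Real.sin_pi_div_three, Real.cos_two_mul', Real.sin_two_mul, hcB, hsB2]
    have h315 : Real.sqrt 3 * Real.sqrt 15 = 3 * Real.sqrt 5 := by
      rw [← Real.sqrt_mul (by norm_num)]
      rw [show (3:ℝ) * 15 = 9 * 5 by norm_num, Real.sqrt_mul (by norm_num),
        show (9:ℝ) = 3^2 by norm_num, Real.sqrt_sq (by norm_num)]
    linear_combination Real.sqrt 3 * hsc + (1/8) * h315
  rw [← hval, Real.arccos_cos (by linarith [Real.pi_pos]) (by linarith [Real.pi_pos])]

theorem stmt11 (γ φ : ℝ) (hγ : γ = Real.arccos (1 / 3))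
    (hφ : φ = (1 + Real.sqrt 5) / 2) :
    ∀ θ ∈ Set.Ioo (0 : ℝ) Real.pi,
      (2 * Real.pi / 3 - Real.arccos ((3 * φ - 1) / 4)
          = 2 * Real.arctan (Real.sqrt (Real.cos (γ / 2) ^ 2 - Real.cos (θ / 2) ^ 2)
              / Real.cos (θ / 2)))
        ↔ θ = 2 * Real.pi / 3 := by
  subst hγ hφ
  intro θ ⟨hθ0, hθπ⟩
  have harg : (3 * ((1 + Real.sqrt 5) / 2) - 1) / 4 = (1 + 3 * Real.sqrt 5) / 8 := by ring
  rw [harg, key]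
  have hcγ : Real.cos (Real.arccos (1/3) / 2) ^ 2 = 2/3 := by
    have h2 : 2 * (Real.arccos (1/3) / 2) = Real.arccos (1/3) := by ring
    rw [Real.cos_sq, h2, Real.cos_arccos (by norm_num) (by norm_num)]
    norm_num
  rw [hcγ]
  have hc_pos : 0 < Real.cos (θ / 2) := Real.cos_pos_of_mem_Ioo
    ⟨by linarith [Real.pi_pos], by linarith⟩
  constructor
  · intro h
    have harc : Real.arctan (Real.sqrt (5/3))
        = Real.arctan (Real.sqrt (2/3 - Real.cos (θ/2)^2) / Real.cos (θ/2)) := by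
      linarith
    have heq : Real.sqrt (5/3) = Real.sqrt (2/3 - Real.cos (θ/2)^2) / Real.cos (θ/2) :=
      Real.arctan_injective harc
    set c := Real.cos (θ/2) with hc
    have heq2 : Real.sqrt (2/3 - c^2) = Real.sqrt (5/3) * c :=
      ((eq_div_iff hc_pos.ne').mp heq).symm
    have h53 : Real.sqrt (5/3) ^ 2 = 5/3 := Real.sq_sqrt (by norm_num)
    have h53pos : (0:ℝ) < Real.sqrt (5/3) := by positivity
    have hnn : 0 ≤ 2/3 - c^2 := by
      by_contra hneg
      push_neg at hneg
      have h0 : Real.sqrt (2/3 - c^2) = 0 := Real.sqrt_eq_zero_of_nonpos (by linarith)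
      nlinarith [mul_pos h53pos hc_pos]
    have hsq : 2/3 - c^2 = 5/3 * c^2 := by
      have hs := Real.sq_sqrt hnn
      rw [heq2, mul_pow, h53] at hs
      linarith
    have hc12 : c = 1/2 := by nlinarith
    have : θ / 2 = Real.pi / 3 := by
      apply Real.injOn_cos ⟨by linarith, by linarith⟩
        ⟨by linarith [Real.pi_pos], by linarith [Real.pi_pos]⟩
      rw [Real.cos_pi_div_three, ← hc, hc12]
    linarith
  · intro h
    subst h
    have hθ2 : 2 * Real.pi / 3 / 2 = Real.pi / 3 := by ring
    rw [hθ2, Real.cos_pi_div_three]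
    have : Real.sqrt (2/3 - (1/2:ℝ)^2) / (1/2) = Real.sqrt (5/3) := by
      rw [show (2/3 - (1/2:ℝ)^2) = 5/12 by norm_num]
      rw [show (5/3 : ℝ) = 4 * (5/12) by norm_num, Real.sqrt_mul (by norm_num),
        show (4:ℝ) = 2^2 by norm_num, Real.sqrt_sq (by norm_num)]
      ring
    rw [this]
    ring
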